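/- Let ⦀·⦀ be a norm on ℝ^d. The following two statements are equivalent: (i) the dual norm ⦀·⦀⋆ is orthant-strictly monotonic and the sequence of generalized top-k norms associated with ⦀·⦀ is strictly increasingly graded with respect to the ℓ0 pseudonorm (for every x ∈ ℝ^d and l ∈ {0,…,d}, ℓ0(x) ≤ l iff ⦀x⦀^top_l = ⦀x⦀^top_d); (ii) both the norm ⦀·⦀ and its dual norm ⦀·⦀⋆ are orthant-strictly monotonic. -/

import Mathlib

open Finset Set

namespace OSMPaper

variable {d : ℕ}

/-- Standard inner product on `ℝ^d = Fin d → ℝ`. -/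
def dot (x y : Fin d → ℝ) : ℝ := ∑ i, x i * y i

/-- `N` is a norm on `ℝ^d`. -/
def IsNorm (N : (Fin d → ℝ) → ℝ) : Prop :=
  (∀ x, 0 ≤ N x) ∧ (∀ x, N x = 0 ↔ x = 0) ∧
  (∀ (c : ℝ) (x : Fin d → ℝ), N (c • x) = |c| * N x) ∧
  (∀ x y, N (x + y) ≤ N x + N y)

/-- `proj K x = x_K`, the vector coinciding with `x` on `K` and zero outside `K`. -/
def proj (K : Finset (Fin d)) (x : Fin d → ℝ) : Fin d → ℝ :=
  fun i => if i ∈ K then x i else 0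

/-- The coordinate subspace `ℝ_K`. -/
def coordSubspace (K : Finset (Fin d)) : Set (Fin d → ℝ) :=
  {x | ∀ j, j ∉ K → x j = 0}

/-- Orthant-monotonic norm. -/
def OrthantMonotonic (N : (Fin d → ℝ) → ℝ) : Prop :=
  ∀ x x' : Fin d → ℝ, (∀ i, |x i| ≤ |x' i|) → (∀ i, 0 ≤ x i * x' i) → N x ≤ N x'

/-- Orthant-strictly monotonic norm. -/
def OrthantStrictlyMonotonic (N : (Fin d → ℝ) → ℝ) : Prop :=
  ∀ x x' : Fin d → ℝ, (∀ i, |x i| ≤ |x' i|) → (∃ j, |x j| < |x' j|) →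
    (∀ i, 0 ≤ x i * x' i) → N x < N x'

/-- Dual norm `⦀y⦀⋆ = sup_{N x ≤ 1} ⟨x, y⟩`. -/
noncomputable def dualNorm (N : (Fin d → ℝ) → ℝ) (y : Fin d → ℝ) : ℝ :=
  sSup {r | ∃ x, N x ≤ 1 ∧ r = dot x y}

/-- Support function of a set `S`. -/
noncomputable def suppFn (S : Set (Fin d → ℝ)) (y : Fin d → ℝ) : ℝ :=
  sSup {r | ∃ x ∈ S, r = dot x y}

/-- Generalized top-`k` norm associated with the source norm `N`. -/
noncomputable def topNorm (N : (Fin d → ℝ) → ℝ) (k : ℕ) (x : Fin d → ℝ) : ℝ :=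
  sSup {r | ∃ K : Finset (Fin d), K.card ≤ k ∧ r = N (proj K x)}

/-- Generalized `k`-support norm: the dual norm of the generalized top-`k` norm. -/
noncomputable def supportNorm (N : (Fin d → ℝ) → ℝ) (k : ℕ) : (Fin d → ℝ) → ℝ :=
  dualNorm (topNorm N k)

/-- The ℓ0 pseudonorm: the number of nonzero components. -/
noncomputable def l0 (x : Fin d → ℝ) : ℕ := Set.ncard {i | x i ≠ 0}

/-- `x` is an extreme point of the convex set `C`. -/
def ExtremePt (C : Set (Fin d → ℝ)) (x : Fin d → ℝ) : Prop :=
  x ∈ C ∧ ∀ y ∈ C, ∀ z ∈ C, ∀ t : ℝ, 0 < t → t < 1 →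
    x = t • y + (1 - t) • z → y = x ∧ z = x

noncomputable def suppF (x : Fin d → ℝ) : Finset (Fin d) := Finset.univ.filter (fun i => x i ≠ 0)

lemma mem_suppF {x : Fin d → ℝ} {i : Fin d} : i ∈ suppF x ↔ x i ≠ 0 := by
  simp [suppF]

lemma l0_eq (x : Fin d → ℝ) : l0 x = (suppF x).card := by
  have h : {i | x i ≠ 0} = (↑(suppF x) : Set (Fin d)) := by
    ext i; simp [suppF]
  rw [l0, h, Set.ncard_coe_finset]

lemma l0_le_d (x : Fin d → ℝ) : l0 x ≤ d := by
  rw [l0_eq]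
  simpa using Finset.card_le_univ (suppF x)

lemma proj_inter_suppF (K : Finset (Fin d)) (x : Fin d → ℝ) :
    proj K x = proj (K ∩ suppF x) x := by
  funext i
  by_cases h0 : x i = 0
  · simp [proj, h0]
  · simp [proj, Finset.mem_inter, mem_suppF, h0]

lemma proj_eq_of_suppF_subset {K : Finset (Fin d)} {x : Fin d → ℝ}
    (h : suppF x ⊆ K) : proj K x = x := by
  funext i
  by_cases hi : i ∈ K
  · simp [proj, hi]
  · have hx : x i = 0 := by
      by_contra hx
      exact hi (h (mem_suppF.mpr hx))
    simp [proj, hi, hx]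

lemma proj_univ (x : Fin d → ℝ) : proj Finset.univ x = x :=
  proj_eq_of_suppF_subset (Finset.subset_univ _)

lemma topSet_finite (N : (Fin d → ℝ) → ℝ) (k : ℕ) (x : Fin d → ℝ) :
    {r | ∃ K : Finset (Fin d), K.card ≤ k ∧ r = N (proj K x)}.Finite := by
  have hsub : {r | ∃ K : Finset (Fin d), K.card ≤ k ∧ r = N (proj K x)} ⊆
      (fun K : Finset (Fin d) => N (proj K x)) '' Set.univ := by
    rintro r ⟨K, -, rfl⟩
    exact ⟨K, trivial, rfl⟩
  exact (Set.finite_univ.image _).subset hsub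

lemma topSet_nonempty (N : (Fin d → ℝ) → ℝ) (k : ℕ) (x : Fin d → ℝ) :
    {r | ∃ K : Finset (Fin d), K.card ≤ k ∧ r = N (proj K x)}.Nonempty :=
  ⟨N (proj ∅ x), ∅, by simp, rfl⟩

lemma le_topNorm (N : (Fin d → ℝ) → ℝ) {k : ℕ} (x : Fin d → ℝ)
    {K : Finset (Fin d)} (hK : K.card ≤ k) : N (proj K x) ≤ topNorm N k x :=
  le_csSup (topSet_finite N k x).bddAbove ⟨K, hK, rfl⟩

lemma topNorm_le (N : (Fin d → ℝ) → ℝ) {k : ℕ} {x : Fin d → ℝ} {c : ℝ}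
    (h : ∀ K : Finset (Fin d), K.card ≤ k → N (proj K x) ≤ c) :
    topNorm N k x ≤ c := by
  refine csSup_le (topSet_nonempty N k x) ?_
  rintro r ⟨K, hK, rfl⟩
  exact h K hK

lemma topNorm_mono (N : (Fin d → ℝ) → ℝ) {k m : ℕ} (h : k ≤ m) (x : Fin d → ℝ) :
    topNorm N k x ≤ topNorm N m x := by
  refine csSup_le_csSup (topSet_finite N m x).bddAbove (topSet_nonempty N k x) ?_
  rintro r ⟨K, hK, rfl⟩
  exact ⟨K, hK.trans h, rfl⟩

lemma topNorm_mem (N : (Fin d → ℝ) → ℝ) (k : ℕ) (x : Fin d → ℝ) :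
    ∃ K : Finset (Fin d), K.card ≤ k ∧ topNorm N k x = N (proj K x) :=
  (topSet_nonempty N k x).csSup_mem (topSet_finite N k x)

lemma N_le_topNorm_d (N : (Fin d → ℝ) → ℝ) (x : Fin d → ℝ) :
    N x ≤ topNorm N d x := by
  have := le_topNorm N x (K := Finset.univ) (k := d)
    (by simp [Finset.card_univ])
  rwa [proj_univ] at this

/-- Lemma A: if `l0 x ≤ l ≤ d` then `topNorm N l x = topNorm N d x` (any `N`). -/
lemma topNorm_eq_of_l0_le (N : (Fin d → ℝ) → ℝ) {x : Fin d → ℝ} {l : ℕ}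
    (hld : l ≤ d) (hl : l0 x ≤ l) : topNorm N l x = topNorm N d x := by
  refine le_antisymm (topNorm_mono N hld x) (topNorm_le N ?_)
  intro K _
  rw [proj_inter_suppF]
  refine le_topNorm N x ?_
  calc (K ∩ suppF x).card ≤ (suppF x).card := Finset.card_le_card Finset.inter_subset_right
    _ = l0 x := (l0_eq x).symm
    _ ≤ l := hl

/-- Lemma B: if `N` is OSM and `l < l0 x` then `topNorm N l x < topNorm N d x`. -/
lemma topNorm_lt_of_lt_l0 {N : (Fin d → ℝ) → ℝ} (hosm : OrthantStrictlyMonotonic N)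
    {x : Fin d → ℝ} {l : ℕ} (hl : l < l0 x) : topNorm N l x < topNorm N d x := by
  obtain ⟨K0, hK0, heq⟩ := topNorm_mem N l x
  have hnotsub : ¬ suppF x ⊆ K0 := by
    intro hsub
    have h1 : (suppF x).card ≤ K0.card := Finset.card_le_card hsub
    have h2 : l0 x = (suppF x).card := l0_eq x
    omega
  obtain ⟨j, hjs, hjK⟩ := Finset.not_subset.mp hnotsub
  have hlt : N (proj K0 x) < N x := by
    refine hosm (proj K0 x) x ?_ ⟨j, ?_⟩ ?_
    · intro i
      by_cases hi : i ∈ K0 <;> simp [proj, hi]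
    · have hj0 : x j ≠ 0 := mem_suppF.mp hjs
      simp [proj, hjK, abs_pos, hj0]
    · intro i
      by_cases hi : i ∈ K0 <;> simp [proj, hi, mul_self_nonneg]
  calc topNorm N l x = N (proj K0 x) := heq
    _ < N x := hlt
    _ ≤ topNorm N d x := N_le_topNorm_d N x


/-- Lemma C: the graded condition forces `N (proj K x) ≤ N x` for every `K`. -/
lemma proj_le_of_graded {N : (Fin d → ℝ) → ℝ}
    (G : ∀ (x : Fin d → ℝ) (l : ℕ), l ≤ d →
      (l0 x ≤ l ↔ topNorm N l x = topNorm N d x)) :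
    ∀ (x : Fin d → ℝ) (K : Finset (Fin d)), N (proj K x) ≤ N x := by
  -- First show topNorm N d x ≤ N x for every x.
  have key : ∀ x : Fin d → ℝ, topNorm N d x ≤ N x := by
    intro x
    by_contra hcon
    push_neg at hcon  -- N x < topNorm N d x
    obtain ⟨K0, hK0, heq⟩ := topNorm_mem N d x
    have hne : proj K0 x ≠ x := by
      intro h
      rw [h] at heq
      exact absurd heq.symm (ne_of_lt hcon)
    have hnotsub : ¬ suppF x ⊆ K0 := fun h => hne (proj_eq_of_suppF_subset h)
    have hl0pos : 1 ≤ l0 x := by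
      rcases Nat.eq_zero_or_pos (l0 x) with h0 | h1
      · exfalso
        apply hnotsub
        rw [l0_eq] at h0
        rw [Finset.card_eq_zero.mp h0]
        exact Finset.empty_subset _
      · exact h1
    have hcard : (K0 ∩ suppF x).card < l0 x := by
      rw [l0_eq]
      refine lt_of_le_of_ne (Finset.card_le_card Finset.inter_subset_right) ?_
      intro hcardeq
      have : K0 ∩ suppF x = suppF x :=
        Finset.eq_of_subset_of_card_le Finset.inter_subset_right (le_of_eq hcardeq.symm)
      exact hnotsub (fun i hi => Finset.mem_inter.mp (this ▸ hi) |>.1)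
    set l := l0 x - 1 with hldef
    have hld : l ≤ d := le_trans (Nat.sub_le _ _) (l0_le_d x)
    have hnle : ¬ l0 x ≤ l := by omega
    have hne2 : topNorm N l x ≠ topNorm N d x := fun h => hnle ((G x l hld).mpr h)
    have hlt2 : topNorm N l x < topNorm N d x :=
      lt_of_le_of_ne (topNorm_mono N (by omega) x) hne2
    have : topNorm N d x ≤ topNorm N l x := by
      rw [heq, proj_inter_suppF]
      exact le_topNorm N x (by omega)
    linarith
  intro x K
  exact le_trans (le_topNorm N x (Finset.card_le_univ K |>.trans (by simp))) (key x)

/-- Lemma S1: under graded, zeroing out one nonzero coordinate strictly decreases `N`. -/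
lemma erase_lt_of_graded {N : (Fin d → ℝ) → ℝ}
    (G : ∀ (x : Fin d → ℝ) (l : ℕ), l ≤ d →
      (l0 x ≤ l ↔ topNorm N l x = topNorm N d x))
    (x' : Fin d → ℝ) (i : Fin d) (hi : x' i ≠ 0) :
    N (proj (Finset.univ.erase i) x') < N x' := by
  have R := proj_le_of_graded G
  have hisupp : i ∈ suppF x' := mem_suppF.mpr hi
  have hl0pos : 1 ≤ l0 x' := by
    rw [l0_eq]
    exact Finset.card_pos.mpr ⟨i, hisupp⟩
  have hproj : proj (Finset.univ.erase i) x' = proj ((suppF x').erase i) x' := by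
    funext j
    by_cases hj : j = i
    · subst hj; simp [proj]
    · by_cases h0 : x' j = 0
      · simp [proj, h0]
      · simp [proj, hj, Finset.mem_erase, mem_suppF, h0]
  have hcard : ((suppF x').erase i).card = l0 x' - 1 := by
    rw [Finset.card_erase_of_mem hisupp, l0_eq]
  have h1 : N (proj (Finset.univ.erase i) x') ≤ topNorm N (l0 x' - 1) x' := by
    rw [hproj]
    exact le_topNorm N x' (le_of_eq hcard)
  have hld : l0 x' - 1 ≤ d := le_trans (Nat.sub_le _ _) (l0_le_d x')
  have hne : topNorm N (l0 x' - 1) x' ≠ topNorm N d x' := by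
    intro h
    have := (G x' (l0 x' - 1) hld).mpr h
    omega
  have h2 : topNorm N (l0 x' - 1) x' < topNorm N d x' :=
    lt_of_le_of_ne (topNorm_mono N hld x') hne
  have h3 : topNorm N d x' ≤ N x' := topNorm_le N (fun K _ => R x' K)
  linarith

/-- decomposition `x = t • x' + (1-t) • (x' with coord i zeroed)` when `x` agrees
with `x'` off `i` and `x i = t * x' i`. -/
lemma single_decomp {x x' : Fin d → ℝ} {i : Fin d} (t : ℝ)
    (hoff : ∀ j, j ≠ i → x j = x' j) (hi : x i = t * x' i) :
    x = t • x' + (1 - t) • proj (Finset.univ.erase i) x' := by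
  funext j
  by_cases hj : j = i
  · subst hj
    simp [proj, Pi.add_apply, Pi.smul_apply, smul_eq_mul, hi]
  · have hje : j ∈ Finset.univ.erase i := Finset.mem_erase.mpr ⟨hj, Finset.mem_univ j⟩
    simp only [Pi.add_apply, Pi.smul_apply, smul_eq_mul, proj, if_pos hje, hoff j hj]
    ring

/-- Lemma S2: single-coordinate non-strict monotonicity, given graded. -/
lemma single_le {N : (Fin d → ℝ) → ℝ} (hN : IsNorm N)
    (G : ∀ (x : Fin d → ℝ) (l : ℕ), l ≤ d →
      (l0 x ≤ l ↔ topNorm N l x = topNorm N d x))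
    {x x' : Fin d → ℝ} {i : Fin d} (hoff : ∀ j, j ≠ i → x j = x' j)
    (habs : |x i| ≤ |x' i|) (hsgn : 0 ≤ x i * x' i) : N x ≤ N x' := by
  obtain ⟨hpos, hzero, hsmul, htri⟩ := hN
  have R := proj_le_of_graded G
  by_cases h0 : x' i = 0
  · have hx0 : x i = 0 := by
      rw [h0, abs_zero] at habs
      exact abs_eq_zero.mp (le_antisymm habs (abs_nonneg _))
    have : x = x' := by
      funext j
      by_cases hj : j = i
      · subst hj; rw [hx0, h0]
      · exact hoff j hj
    rw [this]
  · set t := x i / x' i with htdef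
    have ht0 : 0 ≤ t := by
      have heq : t = (x i * x' i) / (x' i * x' i) := by
        rw [htdef]; field_simp
      rw [heq]
      exact div_nonneg hsgn (mul_self_nonneg _)
    have ht1 : t ≤ 1 := by
      have habs' : |t| ≤ 1 := by
        rw [htdef, abs_div]
        exact div_le_one_of_le₀ habs (abs_nonneg _)
      exact le_trans (le_abs_self t) habs'
    have hdec := single_decomp t hoff (by rw [htdef, div_mul_cancel₀ _ h0])
    set y := proj (Finset.univ.erase i) x' with hydef
    calc N x = N (t • x' + (1 - t) • y) := by rw [hdec]
      _ ≤ N (t • x') + N ((1 - t) • y) := htri _ _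
      _ = t * N x' + (1 - t) * N y := by
          rw [hsmul, hsmul, abs_of_nonneg ht0, abs_of_nonneg (by linarith : (0:ℝ) ≤ 1 - t)]
      _ ≤ t * N x' + (1 - t) * N x' := by
          have := R x' (Finset.univ.erase i)
          nlinarith [hpos y, hpos x']
      _ = N x' := by ring

/-- Lemma S3: single-coordinate strict monotonicity, given graded. -/
lemma single_lt {N : (Fin d → ℝ) → ℝ} (hN : IsNorm N)
    (G : ∀ (x : Fin d → ℝ) (l : ℕ), l ≤ d →
      (l0 x ≤ l ↔ topNorm N l x = topNorm N d x))
    {x x' : Fin d → ℝ} {i : Fin d} (hoff : ∀ j, j ≠ i → x j = x' j)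
    (habs : |x i| < |x' i|) (hsgn : 0 ≤ x i * x' i) : N x < N x' := by
  obtain ⟨hpos, hzero, hsmul, htri⟩ := hN
  have R := proj_le_of_graded G
  have hi0 : x' i ≠ 0 := by
    intro h
    rw [h, abs_zero] at habs
    exact absurd habs (not_lt.mpr (abs_nonneg _))
  have herase := erase_lt_of_graded G x' i hi0
  by_cases hx : x i = 0
  · have : x = proj (Finset.univ.erase i) x' := by
      funext j
      by_cases hj : j = i
      · subst hj; simp [proj, hx]
      · have hje : j ∈ Finset.univ.erase i := Finset.mem_erase.mpr ⟨hj, Finset.mem_univ j⟩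
        show x j = if j ∈ Finset.univ.erase i then x' j else 0
        rw [if_pos hje]
        exact hoff j hj
    rw [this]
    exact herase
  · set t := x i / x' i with htdef
    have htne : x i * x' i ≠ 0 := mul_ne_zero hx hi0
    have hsgn' : 0 < x i * x' i := lt_of_le_of_ne hsgn (Ne.symm htne)
    have ht0 : 0 < t := by
      have heq : t = (x i * x' i) / (x' i * x' i) := by
        rw [htdef]; field_simp
      rw [heq]
      exact div_pos hsgn' (mul_self_pos.mpr hi0)
    have ht1 : t < 1 := by
      have habs' : |t| < 1 := by
        rw [htdef, abs_div]
        exact (div_lt_one (abs_pos.mpr hi0)).mpr habs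
      exact lt_of_le_of_lt (le_abs_self t) habs'
    have hdec := single_decomp t hoff (by rw [htdef, div_mul_cancel₀ _ hi0])
    set y := proj (Finset.univ.erase i) x' with hydef
    calc N x = N (t • x' + (1 - t) • y) := by rw [hdec]
      _ ≤ N (t • x') + N ((1 - t) • y) := htri _ _
      _ = t * N x' + (1 - t) * N y := by
          rw [hsmul, hsmul, abs_of_nonneg (le_of_lt ht0),
            abs_of_nonneg (by linarith : (0:ℝ) ≤ 1 - t)]
      _ < t * N x' + (1 - t) * N x' := by nlinarith
      _ = N x' := by ring

/-- Lemma D: graded implies `N` is orthant-strictly monotonic. -/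
lemma osm_of_graded {N : (Fin d → ℝ) → ℝ} (hN : IsNorm N)
    (G : ∀ (x : Fin d → ℝ) (l : ℕ), l ≤ d →
      (l0 x ≤ l ↔ topNorm N l x = topNorm N d x)) :
    OrthantStrictlyMonotonic N := by
  intro x x' habs hex hsgn
  obtain ⟨j, hj⟩ := hex
  set z : ℕ → (Fin d → ℝ) := fun k i => if (i : ℕ) < k then x' i else x i with hzdef
  have hz0 : z 0 = x := by funext i; simp [hzdef]
  have hzd : z d = x' := by
    funext i
    simp [hzdef, i.isLt]
  have hstep : ∀ k, N (z k) ≤ N (z (k + 1)) := by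
    intro k
    by_cases hk : k < d
    · set i₀ : Fin d := ⟨k, hk⟩ with hi₀
      refine single_le hN G (x := z k) (x' := z (k+1)) (i := i₀) ?_ ?_ ?_
      · intro jj hjj
        have hne : (jj : ℕ) ≠ k := fun h => hjj (Fin.ext h)
        simp only [hzdef]
        by_cases hlt : (jj : ℕ) < k
        · rw [if_pos hlt, if_pos (by omega)]
        · rw [if_neg hlt, if_neg (by omega)]
      · have h1 : z k i₀ = x i₀ := by simp [hzdef, hi₀]
        have h2 : z (k+1) i₀ = x' i₀ := by simp [hzdef, hi₀]
        rw [h1, h2]; exact habs i₀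
      · have h1 : z k i₀ = x i₀ := by simp [hzdef, hi₀]
        have h2 : z (k+1) i₀ = x' i₀ := by simp [hzdef, hi₀]
        rw [h1, h2]; exact hsgn i₀
    · have : z (k + 1) = z k := by
        funext i
        have : (i : ℕ) < k := lt_of_lt_of_le i.isLt (not_lt.mp hk)
        simp [hzdef, this, Nat.lt_succ_of_lt this]
      rw [this]
  have hmono : Monotone (fun k => N (z k)) := monotone_nat_of_le_succ hstep
  have hstrict : N (z (j : ℕ)) < N (z ((j : ℕ) + 1)) := by
    refine single_lt hN G (x := z (j : ℕ)) (x' := z ((j : ℕ) + 1)) (i := j) ?_ ?_ ?_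
    · intro jj hjj
      have hne : (jj : ℕ) ≠ (j : ℕ) := fun h => hjj (Fin.ext h)
      simp only [hzdef]
      by_cases hlt : (jj : ℕ) < (j : ℕ)
      · rw [if_pos hlt, if_pos (by omega)]
      · rw [if_neg hlt, if_neg (by omega)]
    · have h1 : z (j : ℕ) j = x j := by simp [hzdef]
      have h2 : z ((j : ℕ)+1) j = x' j := by simp [hzdef]
      rw [h1, h2]; exact hj
    · have h1 : z (j : ℕ) j = x j := by simp [hzdef]
      have h2 : z ((j : ℕ)+1) j = x' j := by simp [hzdef]
      rw [h1, h2]; exact hsgn j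
  calc N x = N (z 0) := by rw [hz0]
    _ ≤ N (z (j : ℕ)) := hmono (Nat.zero_le _)
    _ < N (z ((j : ℕ) + 1)) := hstrict
    _ ≤ N (z d) := hmono j.isLt
    _ = N x' := by rw [hzd]


/-- Lemma E: OSM implies graded. -/
lemma graded_of_osm {N : (Fin d → ℝ) → ℝ} (hosm : OrthantStrictlyMonotonic N) :
    ∀ (x : Fin d → ℝ) (l : ℕ), l ≤ d →
      (l0 x ≤ l ↔ topNorm N l x = topNorm N d x) := by
  intro x l hld
  constructor
  · exact topNorm_eq_of_l0_le N hld
  · intro h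
    by_contra hnle
    exact absurd h (ne_of_lt (topNorm_lt_of_lt_l0 hosm (not_le.mp hnle)))

/-- the dual norm is orthant-strictly monotonic together with the
sequence of generalized top-k norms being strictly increasingly graded w.r.t.
ℓ0, if and only if both the norm and its dual norm are orthant-strictly
monotonic. -/
theorem dual_osm_and_strictly_graded_iff_both_osm
    (hd : 0 < d) (N : (Fin d → ℝ) → ℝ) (hN : IsNorm N) :
    (OrthantStrictlyMonotonic (dualNorm N) ∧
      ∀ (x : Fin d → ℝ) (l : ℕ), l ≤ d →
        (l0 x ≤ l ↔ topNorm N l x = topNorm N d x)) ↔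
    (OrthantStrictlyMonotonic N ∧ OrthantStrictlyMonotonic (dualNorm N)) := by
  constructor
  · rintro ⟨hdual, G⟩
    exact ⟨osm_of_graded hN G, hdual⟩
  · rintro ⟨hNosm, hdual⟩
    exact ⟨hdual, graded_of_osm hNosm⟩


end OSMPaper
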